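/- For every k ≥ 1, the sum of the first 2k−1 Jacobsthal numbers equals J_{2k} (∑_{i=1}^{2k−1} J_i = J_{2k}), and the sum of the first 2k Jacobsthal numbers equals 2·J_{2k} (∑_{i=1}^{2k} J_i = 2J_{2k} = J_{2k+1} − 1). In both cases, 2k is the largest index of a Jacobsthal number dividing the sum: for every m > 2k, J_m does not divide J_{2k}, and for every m > 2k, J_m does not divide 2·J_{2k}. -/

import Mathlib

/-- The Jacobsthal numbers: J 0 = 0, J 1 = 1, J (n+2) = J (n+1) + 2 * J n. -/
def jacobsthal : ℕ → ℕ
  | 0 => 0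
  | 1 => 1
  | n + 2 => jacobsthal (n + 1) + 2 * jacobsthal n

lemma jacobsthal_pos (n : ℕ) : 1 ≤ jacobsthal (n + 1) := by
  induction n using Nat.strong_induction_on with
  | _ n ih =>
    match n with
    | 0 => simp [jacobsthal]
    | m + 1 =>
      have := ih m (by omega)
      show 1 ≤ jacobsthal (m + 1) + 2 * jacobsthal m
      omega

lemma jacobsthal_step (n : ℕ) :
    jacobsthal (n + 2) = jacobsthal (n + 1) + 2 * jacobsthal n := rfl

lemma jacobsthal_mono {a b : ℕ} (ha : 1 ≤ a) (hab : a ≤ b) :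
    jacobsthal a ≤ jacobsthal b := by
  induction b, hab using Nat.le_induction with
  | base => exact le_refl _
  | succ n hn ih =>
    have h1 : 1 ≤ n := le_trans ha hn
    obtain ⟨m, rfl⟩ : ∃ m, n = m + 1 := ⟨n - 1, by omega⟩
    show jacobsthal a ≤ jacobsthal (m + 2)
    have e := jacobsthal_step m
    omega

lemma jacobsthal_odd (n : ℕ) :
    jacobsthal (2 * n + 1) = 2 * jacobsthal (2 * n) + 1 ∧
    jacobsthal (2 * n + 2) + 1 = 2 * jacobsthal (2 * n + 1) := by
  induction n with
  | zero => simp [jacobsthal]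
  | succ n ih =>
    have e1 : jacobsthal (2 * n + 3) = jacobsthal (2 * n + 2) + 2 * jacobsthal (2 * n + 1) :=
      jacobsthal_step (2 * n + 1)
    have e2 : jacobsthal (2 * n + 4) = jacobsthal (2 * n + 3) + 2 * jacobsthal (2 * n + 2) :=
      jacobsthal_step (2 * n + 2)
    constructor
    · show jacobsthal (2 * n + 3) = 2 * jacobsthal (2 * n + 2) + 1
      omega
    · show jacobsthal (2 * n + 4) + 1 = 2 * jacobsthal (2 * n + 3)
      omega

lemma jacobsthal_sum (n : ℕ) :
    2 * (∑ i ∈ Finset.Icc 1 n, jacobsthal i) + 1 = jacobsthal (n + 2) := by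
  induction n with
  | zero => simp [jacobsthal]
  | succ n ih =>
    have e : jacobsthal (n + 3) = jacobsthal (n + 2) + 2 * jacobsthal (n + 1) :=
      jacobsthal_step (n + 1)
    rw [← Finset.insert_Icc_right_eq_Icc_add_one (by omega : (1:ℕ) ≤ n + 1), Finset.sum_insert (by simp)]
    show 2 * (jacobsthal (n + 1) + ∑ i ∈ Finset.Icc 1 n, jacobsthal i) + 1 = jacobsthal (n + 3)
    omega

/-- The sum of the first 2k-1 Jacobsthal numbers is J_{2k}, the sum of the first
2k is 2 J_{2k} = J_{2k+1} - 1, and in both cases 2k is the largest index of a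
Jacobsthal number dividing the sum. -/
theorem jacobsthal_partial_sums (k : ℕ) (hk : 1 ≤ k) :
    (∑ i ∈ Finset.Icc 1 (2 * k - 1), jacobsthal i) = jacobsthal (2 * k) ∧
    (∑ i ∈ Finset.Icc 1 (2 * k), jacobsthal i) = 2 * jacobsthal (2 * k) ∧
    2 * jacobsthal (2 * k) = jacobsthal (2 * k + 1) - 1 ∧
    (∀ m : ℕ, 2 * k < m → ¬ jacobsthal m ∣ jacobsthal (2 * k)) ∧
    (∀ m : ℕ, 2 * k < m → ¬ jacobsthal m ∣ 2 * jacobsthal (2 * k)) := by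
  obtain ⟨hodd1, hodd2⟩ := jacobsthal_odd k
  have hs1 := jacobsthal_sum (2 * k - 1)
  have he : 2 * k - 1 + 2 = 2 * k + 1 := by omega
  rw [he, hodd1] at hs1
  have hs2 := jacobsthal_sum (2 * k)
  have hpos : 1 ≤ jacobsthal (2 * k) := by
    have h := jacobsthal_pos (2 * k - 1)
    have h2 : 2 * k - 1 + 1 = 2 * k := by omega
    rw [h2] at h
    exact h
  refine ⟨by omega, by omega, by omega, ?_, ?_⟩
  · intro m hm hdvd
    have h1 := jacobsthal_mono (show 1 ≤ 2 * k + 1 by omega) (show 2 * k + 1 ≤ m by omega)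
    have := Nat.le_of_dvd (by omega) hdvd
    omega
  · intro m hm hdvd
    have h1 := jacobsthal_mono (show 1 ≤ 2 * k + 1 by omega) (show 2 * k + 1 ≤ m by omega)
    have := Nat.le_of_dvd (by omega) hdvd
    omega
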